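/- For the contour-integral bracket ⟨V_1,...,V_n⟩ = (1/2πi) ∮_Γ f'(z) Tr(∏_j V_j (z−D)^{-1}) dz on a finite-dimensional Hilbert space, the commutation identity ⟨aV_1, V_2,...,V_n⟩ − ⟨V_1,...,V_{n−1}, V_n a⟩ = ⟨V_1,...,V_n,[D,a]⟩ holds for all bounded operators V_1,...,V_n and a. -/

import Mathlib

/-- The contour-integral bracket `⟨V_1,…,V_n⟩ = (1/2πi) ∮_Γ f'(z) Tr(∏_j V_j (z−D)⁻¹) dz`,
with `Γ` the circle of radius `R` around `0` and `g` playing the role of `f'`. -/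
noncomputable def bracketC {N : ℕ} (g : ℂ → ℂ) (D : Matrix (Fin N) (Fin N) ℂ) (R : ℝ)
    {n : ℕ} (V : Fin n → Matrix (Fin N) (Fin N) ℂ) : ℂ :=
  (2 * (Real.pi : ℂ) * Complex.I)⁻¹ *
    ∮ z in C(0, R), g z *
      Matrix.trace ((List.ofFn
        (fun j => V j * (z • (1 : Matrix (Fin N) (Fin N) ℂ) - D)⁻¹)).prod)

open Matrix


lemma resolvent_comm {N : ℕ} (D a : Matrix (Fin N) (Fin N) ℂ) (z : ℂ)
    (h : IsUnit (z • (1 : Matrix (Fin N) (Fin N) ℂ) - D).det) :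
    (z • (1 : Matrix (Fin N) (Fin N) ℂ) - D)⁻¹ * a - a * (z • 1 - D)⁻¹ =
      (z • 1 - D)⁻¹ * (D * a - a * D) * (z • 1 - D)⁻¹ := by
  set A := z • (1 : Matrix (Fin N) (Fin N) ℂ) - D with hA
  have h1 : A * A⁻¹ = 1 := Matrix.mul_nonsing_inv A h
  have h2 : A⁻¹ * A = 1 := Matrix.nonsing_inv_mul A h
  have hDA : D * a - a * D = a * A - A * a := by
    simp [hA, Matrix.sub_mul, Matrix.mul_sub, smul_mul_assoc, mul_smul_comm]
  rw [hDA]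
  have : A⁻¹ * (a * A - A * a) * A⁻¹ = A⁻¹ * a * (A * A⁻¹) - (A⁻¹ * A) * a * A⁻¹ := by
    noncomm_ring
  rw [this, h1, h2, Matrix.mul_one, Matrix.one_mul]

lemma trace_identity {N : ℕ} (D a : Matrix (Fin N) (Fin N) ℂ) (z : ℂ)
    (h : IsUnit (z • (1 : Matrix (Fin N) (Fin N) ℂ) - D).det)
    (n : ℕ) (V : Fin (n + 1) → Matrix (Fin N) (Fin N) ℂ) :
    Matrix.trace ((List.ofFn (fun j => Function.update V 0 (a * V 0) j *
        (z • (1 : Matrix (Fin N) (Fin N) ℂ) - D)⁻¹)).prod) -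
    Matrix.trace ((List.ofFn (fun j => Function.update V (Fin.last n) (V (Fin.last n) * a) j *
        (z • (1 : Matrix (Fin N) (Fin N) ℂ) - D)⁻¹)).prod) =
    Matrix.trace ((List.ofFn (fun j : Fin (n + 2) => Fin.snoc V (D * a - a * D) j *
        (z • (1 : Matrix (Fin N) (Fin N) ℂ) - D)⁻¹)).prod) := by
  set Rz := (z • (1 : Matrix (Fin N) (Fin N) ℂ) - D)⁻¹ with hRz
  set B := D * a - a * D with hB
  -- names for pieces
  set P' := (List.ofFn (fun i : Fin n => V i.castSucc * Rz)).prod with hP'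
  have hL1 : (List.ofFn (fun j => Function.update V 0 (a * V 0) j * Rz)).prod
      = a * (List.ofFn (fun j => V j * Rz)).prod := by
    rw [List.ofFn_succ, List.ofFn_succ]
    simp [Function.update, Fin.succ_ne_zero, Matrix.mul_assoc]
  have hP : (List.ofFn (fun j => V j * Rz)).prod = P' * (V (Fin.last n) * Rz) := by
    rw [List.ofFn_succ']
    simp [hP']
  have hL2 : (List.ofFn (fun j => Function.update V (Fin.last n) (V (Fin.last n) * a) j * Rz)).prod
      = P' * (V (Fin.last n) * (a * Rz)) := by
    rw [List.ofFn_succ']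
    simp [hP', Function.update, Matrix.mul_assoc]
  have hL3 : (List.ofFn (fun j : Fin (n + 2) => Fin.snoc V B j * Rz)).prod
      = P' * (V (Fin.last n) * Rz) * (B * Rz) := by
    rw [List.ofFn_succ']
    simp only [List.concat_eq_append, List.prod_append, List.prod_cons, List.prod_nil,
      Fin.snoc_castSucc, Fin.snoc_last, mul_one]
    rw [hP]
  rw [hL1, hL2, hL3, hP]
  rw [Matrix.trace_mul_comm a]
  have key : P' * (V (Fin.last n) * Rz) * a - P' * (V (Fin.last n) * (a * Rz))
      = P' * (V (Fin.last n) * Rz) * (B * Rz) := by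
    have hres := resolvent_comm D a z h
    rw [← hRz] at hres
    calc P' * (V (Fin.last n) * Rz) * a - P' * (V (Fin.last n) * (a * Rz))
        = P' * (V (Fin.last n) * (Rz * a - a * Rz)) := by noncomm_ring
      _ = P' * (V (Fin.last n) * (Rz * B * Rz)) := by rw [hres, hB]
      _ = P' * (V (Fin.last n) * Rz) * (B * Rz) := by noncomm_ring
  rw [← Matrix.trace_sub, key]


-- continuity of ofFn product
lemma contOn_ofFn_prod {N m : ℕ} {s : Set ℂ} (F : Fin m → ℂ → Matrix (Fin N) (Fin N) ℂ)
    (hF : ∀ j, ContinuousOn (F j) s) :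
    ContinuousOn (fun z => (List.ofFn (fun j => F j z)).prod) s := by
  induction m with
  | zero => simp [List.ofFn_zero]; exact continuousOn_const
  | succ m ih =>
    simp only [List.ofFn_succ, List.prod_cons]
    exact (hF 0).mul (ih (fun j => F j.succ) (fun j => hF j.succ))

lemma contOn_resolvent {N : ℕ} (D : Matrix (Fin N) (Fin N) ℂ) {s : Set ℂ}
    (hdet : ∀ z ∈ s, (z • (1 : Matrix (Fin N) (Fin N) ℂ) - D).det ≠ 0) :
    ContinuousOn (fun z => (z • (1 : Matrix (Fin N) (Fin N) ℂ) - D)⁻¹) s := by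
  have hc : Continuous (fun z : ℂ => z • (1 : Matrix (Fin N) (Fin N) ℂ) - D) :=
    (continuous_id.smul continuous_const).sub continuous_const
  have heq : (fun z => (z • (1 : Matrix (Fin N) (Fin N) ℂ) - D)⁻¹)
      = fun z : ℂ => (((z • (1 : Matrix (Fin N) (Fin N) ℂ) - D).det)⁻¹ : ℂ) •
          (z • (1 : Matrix (Fin N) (Fin N) ℂ) - D).adjugate := by
    funext z
    rw [Matrix.inv_def, Ring.inverse_eq_inv']
  rw [heq]
  exact ((hc.matrix_det.continuousOn.inv₀ hdet)).smul hc.matrix_adjugate.continuousOn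

/-- The commutation identity
`⟨aV_1, V_2,…,V_n⟩ − ⟨V_1,…,V_{n−1}, V_n a⟩ = ⟨V_1,…,V_n,[D,a]⟩`. -/
theorem bracketC_comm {N : ℕ} (g : ℂ → ℂ) (D : Matrix (Fin N) (Fin N) ℂ)
    (hD : D.IsHermitian) (R : ℝ)
    (hspec : ∀ μ ∈ spectrum ℂ D, ‖μ‖ < R)
    (hg : DifferentiableOn ℂ g (Metric.closedBall 0 R))
    (n : ℕ) (V : Fin (n + 1) → Matrix (Fin N) (Fin N) ℂ)
    (a : Matrix (Fin N) (Fin N) ℂ) :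
    bracketC g D R (Function.update V 0 (a * V 0)) -
      bracketC g D R (Function.update V (Fin.last n) (V (Fin.last n) * a)) =
    bracketC g D R (Fin.snoc V (D * a - a * D)) := by
  rcases Nat.eq_zero_or_pos N with rfl | hN
  · -- trivial case `N = 0`
    simp [bracketC, Matrix.trace, circleIntegral]
  · -- `N > 0`
    have hμ : ((hD.eigenvalues ⟨0, hN⟩ : ℝ) : ℂ) ∈ spectrum ℂ D :=
      spectrum.algebraMap_mem ℂ (hD.eigenvalues_mem_spectrum_real ⟨0, hN⟩)
    have hR : 0 < R := lt_of_le_of_lt (norm_nonneg _) (hspec _ hμ)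
    have hdet : ∀ z ∈ Metric.sphere (0 : ℂ) R,
        (z • (1 : Matrix (Fin N) (Fin N) ℂ) - D).det ≠ 0 := by
      intro z hz
      have hznorm : ‖z‖ = R := by simpa using hz
      have hznot : z ∉ spectrum ℂ D := fun hmem => absurd (hspec z hmem) (by rw [hznorm]; simp)
      have hunit : IsUnit (z • (1 : Matrix (Fin N) (Fin N) ℂ) - D) := by
        have := spectrum.notMem_iff.mp hznot
        rwa [Algebra.algebraMap_eq_smul_one] at this
      exact isUnit_iff_ne_zero.mp ((Matrix.isUnit_iff_isUnit_det _).mp hunit)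
    have hdet' : ∀ z ∈ Metric.sphere (0 : ℂ) R,
        IsUnit (z • (1 : Matrix (Fin N) (Fin N) ℂ) - D).det :=
      fun z hz => isUnit_iff_ne_zero.mpr (hdet z hz)
    have hres := contOn_resolvent D hdet
    have hg' : ContinuousOn g (Metric.sphere (0 : ℂ) R) :=
      hg.continuousOn.mono Metric.sphere_subset_closedBall
    -- integrability of each integrand
    have hint : ∀ {m : ℕ} (W : Fin m → Matrix (Fin N) (Fin N) ℂ),
        CircleIntegrable (fun z => g z * Matrix.trace ((List.ofFn
          (fun j => W j * (z • (1 : Matrix (Fin N) (Fin N) ℂ) - D)⁻¹)).prod)) 0 R := by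
      intro m W
      refine ContinuousOn.circleIntegrable hR.le ?_
      refine hg'.mul ?_
      exact (continuous_id.matrix_trace).comp_continuousOn
        (contOn_ofFn_prod _ (fun j => continuousOn_const.mul hres))
    unfold bracketC
    rw [← mul_sub, ← circleIntegral.integral_sub (hint _) (hint _)]
    congr 1
    refine circleIntegral.integral_congr hR.le ?_
    intro z hz
    simp only [Pi.sub_apply]
    rw [← mul_sub, trace_identity D a z (hdet' z hz) n V]
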